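/- Let d ≥ 1 and define g(y) = ln cosh(y) − y²/2 for y ∈ ℝ. There exists c > 0 such that, for every n ≥ 1, every family of vectors a_1,…,a_n ∈ ℝ^d satisfying ∑_{i=1}^n a_i ᵗa_i = I_d (the d×d identity matrix), and every z ∈ ℝ^d, one has ∑_{i=1}^n g(n^{1/4}⟨z, a_i⟩) ≤ −c‖z‖⁴ / (1 + ‖z‖²/√n). -/

import Mathlib

open MeasureTheory Filter Matrix Real

noncomputable section

/-- `T_n(x) = ∑ i, x_i ᵗx_i`. -/
def Tmat (d n : ℕ) (x : Fin n → Fin d → ℝ) : Matrix (Fin d) (Fin d) ℝ :=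
  ∑ i, Matrix.vecMulVec (x i) (x i)

/-- `S_n(x) = x_1 + … + x_n`. -/
def Svec (d n : ℕ) (x : Fin n → Fin d → ℝ) : Fin d → ℝ := ∑ i, x i

/-- the Hamiltonian `(1/2)⟨T_n⁻¹ S_n, S_n⟩`. -/
def Hfun (d n : ℕ) (x : Fin n → Fin d → ℝ) : ℝ :=
  (1 / 2) * dotProduct ((Tmat d n x)⁻¹.mulVec (Svec d n x)) (Svec d n x)

/-- normalization constant `Z_n`. -/
def Zconst (d : ℕ) (ρ : Measure (Fin d → ℝ)) (n : ℕ) : ℝ :=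
  ∫ x : Fin n → Fin d → ℝ,
    Set.indicator {x | 0 < (Tmat d n x).det} (fun x => Real.exp (Hfun d n x)) x
    ∂ Measure.pi fun _ => ρ

/-- the Curie-Weiss model of SOC `μ̃_{n,ρ}`. -/
def CW (d : ℕ) (ρ : Measure (Fin d → ℝ)) (n : ℕ) : Measure (Fin n → Fin d → ℝ) :=
  (Measure.pi fun _ => ρ).withDensity fun x =>
    Set.indicator {x | 0 < (Tmat d n x).det}
      (fun x => ENNReal.ofReal (Real.exp (Hfun d n x) / Zconst d ρ n)) x

/-- covariance matrix `Σ = ∫ z ᵗz dρ(z)`. -/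
def covM (d : ℕ) (ρ : Measure (Fin d → ℝ)) : Matrix (Fin d) (Fin d) ℝ :=
  Matrix.of fun i j => ∫ z, z i * z j ∂ρ

/-- `M₄(z) = ∑ (∫ yᵢyⱼyₖyₗ dρ) zᵢzⱼzₖzₗ`. -/
def M4 (d : ℕ) (ρ : Measure (Fin d → ℝ)) (z : Fin d → ℝ) : ℝ :=
  ∑ i : Fin d, ∑ j : Fin d, ∑ k : Fin d, ∑ l : Fin d,
    (∫ y, y i * y j * y k * y l ∂ρ) * (z i * z j * z k * z l)

/-- symmetric measure: invariant under `z ↦ -z`. -/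
def SymMeas (d : ℕ) (ρ : Measure (Fin d → ℝ)) : Prop := ρ.map (fun z => -z) = ρ

/-- condition `(*)` : some Gaussian exponential moment. -/
def CondStar (d : ℕ) (ρ : Measure (Fin d → ℝ)) : Prop :=
  ∃ v₀ > (0:ℝ), Integrable (fun z => Real.exp (v₀ * dotProduct z z)) ρ

/-- the ρ-measure of every vector hyperplane is `< 1/√e`. -/
def HypLt (d : ℕ) (ρ : Measure (Fin d → ℝ)) : Prop :=
  ∀ s : Fin d → ℝ, s ≠ 0 →
    ρ {z | dotProduct s z = 0} < ENNReal.ofReal (1 / Real.sqrt (Real.exp 1))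

/-- non-degeneracy: the ρ-measure of every affine hyperplane is `< 1`. -/
def NonDeg (d : ℕ) (ρ : Measure (Fin d → ℝ)) : Prop :=
  ∀ s : Fin d → ℝ, s ≠ 0 → ∀ c : ℝ, ρ {z | dotProduct s z = c} < 1

-- positive square root of a positive semi-definite matrix (junk value otherwise).
open scoped Classical in
def psqrt (d : ℕ) (M : Matrix (Fin d) (Fin d) ℝ) : Matrix (Fin d) (Fin d) ℝ :=
  if h : M.PosSemidef then h.1.eigenvectorUnitary.1 *
    diagonal (((↑) : ℝ → ℝ) ∘ (√·) ∘ h.1.eigenvalues) *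
    (star h.1.eigenvectorUnitary : Matrix (Fin d) (Fin d) ℝ) else 0

/-- Euclidean norm on `ℝ^d`. -/
def vnorm (d : ℕ) (v : Fin d → ℝ) : ℝ := Real.sqrt (dotProduct v v)

/-- Frobenius norm on `d × d` matrices. -/
def mnorm (d : ℕ) (M : Matrix (Fin d) (Fin d) ℝ) : ℝ :=
  Real.sqrt (∑ i : Fin d, ∑ j : Fin d, (M i j) ^ 2)

/-- the log-Laplace transform `Λ` of `(Z, Z ᵗZ)`, with values in `(-∞, +∞]`. -/
def Lam (d : ℕ) (ρ : Measure (Fin d → ℝ)) (u : Fin d → ℝ)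
    (A : Matrix (Fin d) (Fin d) ℝ) : EReal :=
  ENNReal.log (∫⁻ z, ENNReal.ofReal
    (Real.exp (dotProduct u z + dotProduct (A.mulVec z) z)) ∂ρ)

/-- the Cramér transform `I` of `(Z, Z ᵗZ)`. -/
def CramerI (d : ℕ) (ρ : Measure (Fin d → ℝ)) (x : Fin d → ℝ)
    (M : Matrix (Fin d) (Fin d) ℝ) : EReal :=
  ⨆ p : (Fin d → ℝ) × {A : Matrix (Fin d) (Fin d) ℝ // A.IsSymm},
    ((dotProduct x p.1 + (M * (p.2 : Matrix (Fin d) (Fin d) ℝ)).trace : ℝ) : EReal)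
      - Lam d ρ p.1 p.2

end

-- derivative of G
lemma Gderiv (y : ℝ) :
    HasDerivAt (fun y : ℝ => y - y^3/(3*(1+y^2)) - Real.sinh y / Real.cosh y)
      (1 - ((3*y^2)*(3*(1+y^2)) - y^3*(3*(2*y)))/(3*(1+y^2))^2
        - (Real.cosh y * Real.cosh y - Real.sinh y * Real.sinh y)/(Real.cosh y)^2) y := by
  have h1 : (3*(1+y^2)) ≠ 0 := by positivity
  have h2 : Real.cosh y ≠ 0 := (Real.cosh_pos y).ne'
  have ha : HasDerivAt (fun y : ℝ => y^3) (3*y^2) y := by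
    simpa using (hasDerivAt_pow 3 y)
  have hb : HasDerivAt (fun y : ℝ => 3*(1+y^2)) (3*(2*y)) y := by
    have : HasDerivAt (fun y : ℝ => 1+y^2) (2*y) y := by
      simpa using ((hasDerivAt_pow 2 y).const_add 1)
    simpa using this.const_mul 3
  exact ((hasDerivAt_id y).sub (ha.div hb h1)).sub
    ((Real.hasDerivAt_sinh y).div (Real.hasDerivAt_cosh y) h2)

lemma tanh_le (y : ℝ) (hy : 0 ≤ y) : Real.sinh y / Real.cosh y ≤ y - y^3/(3*(1+y^2)) := by
  set G : ℝ → ℝ := fun y => y - y^3/(3*(1+y^2)) - Real.sinh y / Real.cosh y with hGdef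
  have key : MonotoneOn G (Set.Ici 0) := by
    apply monotoneOn_of_deriv_nonneg (convex_Ici 0)
    · exact fun x _ => ((Gderiv x).continuousAt).continuousWithinAt
    · exact fun x _ => ((Gderiv x).differentiableAt).differentiableWithinAt
    · intro x hx
      rw [interior_Ici] at hx
      rw [(Gderiv x).deriv]
      have hx0 : (0:ℝ) ≤ x := le_of_lt hx
      have hs : x ≤ Real.sinh x := (Real.self_le_sinh_iff).2 hx0
      have hc : Real.cosh x ^ 2 = 1 + Real.sinh x ^ 2 := by
        have := Real.cosh_sq_sub_sinh_sq x; nlinarith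
      have hcp : (0:ℝ) < Real.cosh x ^ 2 := by positivity
      have h1 : (0:ℝ) < 1 + x^2 := by positivity
      have hC : Real.cosh x * Real.cosh x - Real.sinh x * Real.sinh x = 1 := by
        nlinarith [Real.cosh_sq_sub_sinh_sq x]
      rw [hC, hc]
      set s := Real.sinh x
      have hs2 : (0:ℝ) < 1 + s^2 := by positivity
      have e2 : (1:ℝ) - 1/(1+s^2) = s^2/(1+s^2) := by field_simp; ring
      have h3 : x^2/(1+x^2) ≤ s^2/(1+s^2) := by
        rw [div_le_div_iff₀ h1 hs2]; nlinarith
      have h4 : (3*x^2*(3*(1+x^2)) - x^3*(3*(2*x)))/(3*(1+x^2))^2 ≤ x^2/(1+x^2) := by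
        rw [div_le_div_iff₀ (by positivity) h1]; nlinarith [pow_nonneg hx0 4, pow_nonneg hx0 6]
      linarith
  have h0 : G 0 = 0 := by simp [hGdef]
  have := key (Set.self_mem_Ici) (Set.mem_Ici.2 hy) hy
  rw [h0] at this
  simp only [hGdef] at this
  linarith

lemma Fderiv (y : ℝ) :
    HasDerivAt (fun y : ℝ => y^2/2 - y^4/(12*(1+y^2)) - Real.log (Real.cosh y))
      ((2*y)/2 - ((4*y^3)*(12*(1+y^2)) - y^4*(12*(2*y)))/(12*(1+y^2))^2
        - Real.sinh y / Real.cosh y) y := by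
  have h1 : (12*(1+y^2)) ≠ 0 := by positivity
  have h2 : Real.cosh y ≠ 0 := (Real.cosh_pos y).ne'
  have ha : HasDerivAt (fun y : ℝ => y^2/2) ((2*y)/2) y := by
    simpa using (hasDerivAt_pow 2 y).div_const 2
  have hb : HasDerivAt (fun y : ℝ => y^4) (4*y^3) y := by
    simpa using (hasDerivAt_pow 4 y)
  have hc : HasDerivAt (fun y : ℝ => 12*(1+y^2)) (12*(2*y)) y := by
    have : HasDerivAt (fun y : ℝ => 1+y^2) (2*y) y := by
      simpa using ((hasDerivAt_pow 2 y).const_add 1)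
    simpa using this.const_mul 12
  exact (ha.sub (hb.div hc h1)).sub ((Real.hasDerivAt_cosh y).log h2)

lemma logcosh_le (y : ℝ) (hy : 0 ≤ y) :
    Real.log (Real.cosh y) ≤ y^2/2 - y^4/(12*(1+y^2)) := by
  set F : ℝ → ℝ := fun y => y^2/2 - y^4/(12*(1+y^2)) - Real.log (Real.cosh y) with hFdef
  have key : MonotoneOn F (Set.Ici 0) := by
    apply monotoneOn_of_deriv_nonneg (convex_Ici 0)
    · exact fun x _ => ((Fderiv x).continuousAt).continuousWithinAt
    · exact fun x _ => ((Fderiv x).differentiableAt).differentiableWithinAt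
    · intro x hx
      rw [interior_Ici] at hx
      rw [(Fderiv x).deriv]
      have hx0 : (0:ℝ) ≤ x := le_of_lt hx
      have h1 : (0:ℝ) < 1 + x^2 := by positivity
      have ht := tanh_le x hx0
      have h4 : ((4*x^3)*(12*(1+x^2)) - x^4*(12*(2*x)))/(12*(1+x^2))^2
          ≤ x^3/(3*(1+x^2)) := by
        rw [div_le_div_iff₀ (by positivity) (by positivity)]
        nlinarith [pow_nonneg hx0 5, pow_pos h1 2]
      linarith
  have h0 : F 0 = 0 := by simp [hFdef]
  have := key (Set.self_mem_Ici) (Set.mem_Ici.2 hy) hy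
  rw [h0] at this
  simp only [hFdef] at this
  linarith

lemma g_le (y : ℝ) : Real.log (Real.cosh y) - y^2/2 ≤ -(y^4/(12*(1+y^2))) := by
  rcases le_total 0 y with h | h
  · have := logcosh_le y h; linarith
  · have := logcosh_le (-y) (by linarith)
    rw [Real.cosh_neg] at this
    have e : (-y)^2 = y^2 := by ring
    have e4 : (-y)^4 = y^4 := by ring
    rw [e, e4] at this; linarith

/-- uniform quartic upper bound for `∑ g(n^{1/4}⟨z,aᵢ⟩)`
where `g(y) = ln cosh y - y²/2`. -/
theorem sum_logCosh_quartic_bound (d : ℕ) (hd : 1 ≤ d) :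
    ∃ c > (0:ℝ), ∀ n : ℕ, 1 ≤ n → ∀ a : Fin n → Fin d → ℝ,
      (∑ i, Matrix.vecMulVec (a i) (a i)) = 1 → ∀ z : Fin d → ℝ,
      (∑ i, (Real.log (Real.cosh ((n:ℝ) ^ ((1:ℝ)/4) * dotProduct z (a i)))
        - ((n:ℝ) ^ ((1:ℝ)/4) * dotProduct z (a i)) ^ 2 / 2))
      ≤ -(c * vnorm d z ^ 4) / (1 + vnorm d z ^ 2 / Real.sqrt n) := by
  refine ⟨1/12, by norm_num, fun n hn a h z => ?_⟩
  set p : ℝ := (n:ℝ) ^ ((1:ℝ)/4) with hp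
  set y : Fin n → ℝ := fun i => p * dotProduct z (a i) with hy
  set t : ℝ := dotProduct z z with ht
  have htnn : 0 ≤ t := Finset.sum_nonneg fun i _ => mul_self_nonneg _
  set sn : ℝ := Real.sqrt n with hsn
  have hsnpos : 0 < sn := Real.sqrt_pos.2 (by exact_mod_cast Nat.pos_of_ne_zero (by omega))
  have hsn2 : sn^2 = n := Real.sq_sqrt (Nat.cast_nonneg n)
  have hp2 : p^2 = sn := by
    rw [hp, hsn, ← Real.rpow_natCast ((n:ℝ) ^ ((1:ℝ)/4)) 2,
      ← Real.rpow_mul (Nat.cast_nonneg n), Real.sqrt_eq_rpow]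
    norm_num
  -- the ∑ ⟨z,aᵢ⟩² = ‖z‖² identity
  have hone : ∀ k l, (∑ i, a i k * a i l) = (1 : Matrix (Fin d) (Fin d) ℝ) k l := by
    intro k l
    have := congrFun (congrFun h k) l
    simpa [Matrix.sum_apply, Matrix.vecMulVec_apply] using this
  have hsumsq : ∑ i, (dotProduct z (a i))^2 = t := by
    have e1 : ∑ i, (dotProduct z (a i))^2
        = ∑ i, ∑ k, ∑ l, (z k * z l) * (a i k * a i l) := by
      refine Finset.sum_congr rfl fun i _ => ?_
      rw [dotProduct, sq, Finset.sum_mul_sum]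
      exact Finset.sum_congr rfl fun k _ => Finset.sum_congr rfl fun l _ => by ring
    rw [e1, Finset.sum_comm]
    have e2 : ∀ k : Fin d, ∑ i, ∑ l, (z k * z l) * (a i k * a i l)
        = ∑ l, (z k * z l) * (∑ i, a i k * a i l) := by
      intro k
      rw [Finset.sum_comm]
      exact Finset.sum_congr rfl fun l _ => by rw [Finset.mul_sum]
    rw [Finset.sum_congr rfl fun k _ => e2 k]
    simp only [hone, Matrix.one_apply, mul_ite, mul_one, mul_zero]
    simp [dotProduct, ht]
  have hyS : ∑ i, (y i)^2 = sn * t := by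
    rw [← hsumsq, Finset.mul_sum]
    refine Finset.sum_congr rfl fun i _ => ?_
    rw [hy]; rw [mul_pow, hp2]
  -- Cauchy–Schwarz
  set Q : ℝ := ∑ i, (y i)^4 / (1 + (y i)^2) with hQ
  have hden : ∀ i, (0:ℝ) < 1 + (y i)^2 := fun i => by positivity
  have hcs : (sn*t)^2 ≤ Q * (n + sn*t) := by
    have h1 := Finset.sum_mul_sq_le_sq_mul_sq Finset.univ
      (fun i => (y i)^2 / Real.sqrt (1 + (y i)^2)) (fun i => Real.sqrt (1 + (y i)^2))
    have e1 : ∀ i : Fin n, (y i)^2 / Real.sqrt (1 + (y i)^2) * Real.sqrt (1 + (y i)^2)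
        = (y i)^2 := fun i => div_mul_cancel₀ _ (by positivity)
    have e2 : ∀ i : Fin n, ((y i)^2 / Real.sqrt (1 + (y i)^2))^2
        = (y i)^4 / (1 + (y i)^2) := by
      intro i
      rw [div_pow, Real.sq_sqrt (hden i).le, ← pow_mul]
    have e3 : ∀ i : Fin n, (Real.sqrt (1 + (y i)^2))^2 = 1 + (y i)^2 :=
      fun i => Real.sq_sqrt (hden i).le
    simp only [e1, e2, e3] at h1
    rw [Finset.sum_add_distrib, Finset.sum_const, Finset.card_univ, Fintype.card_fin,
      nsmul_eq_mul, mul_one, hyS] at h1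
    exact h1
  have hQnn : 0 ≤ Q := Finset.sum_nonneg fun i _ => by positivity
  -- pointwise bound
  have hsum : (∑ i, (Real.log (Real.cosh (y i)) - (y i)^2/2)) ≤ -(1/12) * Q := by
    have h1 : (∑ i, (Real.log (Real.cosh (y i)) - (y i)^2/2))
        ≤ ∑ i, -((y i)^4/(12*(1+(y i)^2))) := Finset.sum_le_sum fun i _ => g_le (y i)
    refine h1.trans (le_of_eq ?_)
    rw [hQ, Finset.mul_sum]
    refine Finset.sum_congr rfl fun i _ => ?_
    have := (hden i).ne'
    field_simp
  -- final arithmetic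
  have hvn2 : vnorm d z ^ 2 = t := Real.sq_sqrt htnn
  have hvn4 : vnorm d z ^ 4 = t^2 := by
    rw [show (4:ℕ) = 2*2 from rfl, pow_mul, hvn2]
  rw [hvn2, hvn4]
  have hdenpos : (0:ℝ) < n + sn*t := by
    have : (1:ℝ) ≤ n := by exact_mod_cast hn
    nlinarith [mul_nonneg hsnpos.le htnn]
  have hdenpos2 : (0:ℝ) < 1 + t / sn := by positivity
  have hQge : (sn*t)^2 / (n + sn*t) ≤ Q := by
    rw [div_le_iff₀ hdenpos] at *
    exact hcs
  have hfin : -(1/12) * Q ≤ -(1/12 * t^2) / (1 + t/sn) := by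
    have hne1 : (↑n + sn*t : ℝ) ≠ 0 := hdenpos.ne'
    have hne2 : (1 + t/sn : ℝ) ≠ 0 := hdenpos2.ne'
    have hne3 : sn ≠ 0 := hsnpos.ne'
    have heq : (1/12 * t^2) / (1 + t/sn) = (1/12) * ((sn*t)^2 / (↑n + sn*t)) := by
      rw [← hsn2] at hne1 ⊢
      field_simp
    rw [neg_div, heq]
    linarith
  calc (∑ i, (Real.log (Real.cosh (y i)) - (y i)^2/2)) ≤ -(1/12) * Q := hsum
    _ ≤ -(1/12 * t^2) / (1 + t/sn) := hfin
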